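/- Let 0 ≤ m < n and let H' = { diag(g,h) : g ∈ O(1,m+1), h ∈ O(n−m) } ⊆ O(1,n+1) be the block diagonal embedding. Identify ℝ^{n+1} = ℝ^{m+1} × ℝ^{n−m} and write points of S^n as (x',x''). Then under the action ∘, the H'-orbit of the last standard basis vector e_{n+1} equals 𝒪₁ = { (x',x'') ∈ S^n : x'' ≠ 0 }, which is an open dense subset of S^n, and the H'-orbit of the first standard basis vector e₁ equals 𝒪₀ = { (x',0) : x' ∈ ℝ^{m+1}, |x'| = 1 }. -/

import Mathlib

open Matrix

noncomputable section

/-- The quadratic form matrix `J = diag(1,−1,…,−1)`. -/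
def Jmat (n : ℕ) : Matrix (Fin (n + 2)) (Fin (n + 2)) ℝ :=
  diagonal fun i => if i = 0 then 1 else -1

/-- Membership in `O(1,n+1)`: `gᵀ J g = J`. -/
def inO (n : ℕ) (g : Matrix (Fin (n + 2)) (Fin (n + 2)) ℝ) : Prop :=
  gᵀ * Jmat n * g = Jmat n

/-- The action `g∘x = v/t` where `g·(1,x)ᵀ = (t,v)`. -/
def act (n : ℕ) (g : Matrix (Fin (n + 2)) (Fin (n + 2)) ℝ) (x : Fin (n + 1) → ℝ) :
    Fin (n + 1) → ℝ :=
  (g.mulVec (Fin.cons 1 x) 0)⁻¹ • fun i => g.mulVec (Fin.cons 1 x) i.succ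

/-- The identification `Fin (m+2) ⊕ Fin (n−m) ≃ Fin (n+2)` (for `m < n`). -/
def blockEquiv (m n : ℕ) (h : m < n) : Fin (m + 2) ⊕ Fin (n - m) ≃ Fin (n + 2) :=
  finSumFinEquiv.trans (finCongr (by omega))

/-- Membership in the block diagonally embedded subgroup
`H' = { diag(g,h) : g ∈ O(1,m+1), h ∈ O(n−m) }`. -/
def inH' (m n : ℕ) (h : m < n) (g : Matrix (Fin (n + 2)) (Fin (n + 2)) ℝ) : Prop :=
  ∃ (A : Matrix (Fin (m + 2)) (Fin (m + 2)) ℝ) (B : Matrix (Fin (n - m)) (Fin (n - m)) ℝ),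
    inO m A ∧ Bᵀ * B = 1 ∧
    g = (reindex (blockEquiv m n h) (blockEquiv m n h)) (fromBlocks A 0 0 B)

lemma JmatA (n : ℕ) (A : Matrix (Fin (n+2)) (Fin (n+2)) ℝ) (i j : Fin (n+2)) :
    (Aᵀ * Jmat n * A) i j
      = A 0 i * A 0 j - ∑ k : Fin (n+1), A k.succ i * A k.succ j := by
  rw [Matrix.mul_assoc, Matrix.mul_apply]
  have : ∀ k, (Jmat n * A) k j = (if k = 0 then (1:ℝ) else -1) * A k j := by
    intro k; rw [Jmat, diagonal_mul]
  simp only [transpose_apply, this]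
  rw [Fin.sum_univ_succ]
  simp only [if_pos rfl, Fin.succ_ne_zero, if_neg, sub_eq_add_neg, ← Finset.sum_neg_distrib]
  congr 1
  · simp only [if_true]; ring
  · apply Finset.sum_congr rfl; intro k _; simp only [if_false]; ring

lemma Jmat_apply (n : ℕ) (i j : Fin (n+2)) :
    Jmat n i j = if i = j then (if i = 0 then (1:ℝ) else -1) else 0 := by
  rw [Jmat, diagonal_apply]

lemma inO_col (n : ℕ) (A : Matrix (Fin (n+2)) (Fin (n+2)) ℝ) (hA : inO n A) (i j : Fin (n+2)) :
    A 0 i * A 0 j - ∑ k : Fin (n+1), A k.succ i * A k.succ j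
      = if i = j then (if i = 0 then (1:ℝ) else -1) else 0 := by
  rw [← JmatA, hA, Jmat_apply]

def boost (m : ℕ) (t : ℝ) (v : Fin (m+1) → ℝ) : Matrix (Fin (m+2)) (Fin (m+2)) ℝ :=
  Matrix.of (Fin.cons (Fin.cons t v)
    (fun i => Fin.cons (v i) (fun j => (if i = j then (1:ℝ) else 0) + v i * v j / (1+t))))

@[simp] lemma boost_00 (m t v) : boost m t v 0 0 = t := rfl
@[simp] lemma boost_0s (m t v) (j : Fin (m+1)) : boost m t v 0 j.succ = v j := by
  simp [boost]
@[simp] lemma boost_s0 (m t v) (i : Fin (m+1)) : boost m t v i.succ 0 = v i := by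
  simp [boost]
@[simp] lemma boost_ss (m t v) (i j : Fin (m+1)) :
    boost m t v i.succ j.succ = (if i = j then (1:ℝ) else 0) + v i * v j / (1+t) := by
  simp [boost]

lemma boost_inO (m : ℕ) (t : ℝ) (v : Fin (m+1) → ℝ) (ht : 0 < t)
    (ht2 : t ^ 2 - ∑ i, v i ^ 2 = 1) : inO m (boost m t v) := by
  have h1t : (1:ℝ) + t ≠ 0 := by linarith
  have hS : ∑ i, v i ^ 2 = t ^ 2 - 1 := by linarith
  unfold inO
  ext i j
  rw [JmatA, Jmat_apply]
  induction i using Fin.cases with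
  | zero =>
    induction j using Fin.cases with
    | zero =>
      simp only [boost_00, boost_s0, if_pos rfl]
      have e0 : ∑ k : Fin (m+1), v k * v k = ∑ k, v k ^ 2 :=
        Finset.sum_congr rfl (fun k _ => (pow_two (v k)).symm)
      rw [e0, hS]; norm_num; ring_nf
    | succ j =>
      have hji : (0 : Fin (m+2)) ≠ j.succ := (Fin.succ_ne_zero j).symm
      simp only [boost_00, boost_0s, boost_s0, boost_ss, if_neg hji]
      have e1 : ∑ k, v k * ((if k = j then (1:ℝ) else 0) + v k * v j / (1+t))
          = v j + (∑ k, v k ^ 2) * (v j / (1+t)) := by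
        rw [Finset.sum_congr rfl (fun k _ => mul_add (v k) _ _), Finset.sum_add_distrib]
        congr 1
        · simp [mul_ite]
        · rw [Finset.sum_mul]
          exact Finset.sum_congr rfl (fun k _ => by ring)
      rw [e1, hS]
      field_simp
      ring
  | succ i =>
    induction j using Fin.cases with
    | zero =>
      have hij : i.succ ≠ (0 : Fin (m+2)) := Fin.succ_ne_zero i
      simp only [boost_00, boost_0s, boost_s0, boost_ss, if_neg hij]
      have e1 : ∑ k, ((if k = i then (1:ℝ) else 0) + v k * v i / (1+t)) * v k
          = v i + (∑ k, v k ^ 2) * (v i / (1+t)) := by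
        rw [Finset.sum_congr rfl (fun k _ => add_mul _ _ (v k)), Finset.sum_add_distrib]
        congr 1
        · simp [ite_mul]
        · rw [Finset.sum_mul]
          exact Finset.sum_congr rfl (fun k _ => by ring)
      rw [e1, hS]
      field_simp
      ring
    | succ j =>
      have hsz : i.succ ≠ (0 : Fin (m+2)) := Fin.succ_ne_zero i
      have hiff : (i.succ = j.succ) = (i = j) := by
        simp [Fin.succ_inj]
      simp only [boost_0s, boost_ss, hiff, if_neg hsz]
      have expand : ∀ k : Fin (m+1),
          ((if k = i then (1:ℝ) else 0) + v k * v i / (1+t)) *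
            ((if k = j then (1:ℝ) else 0) + v k * v j / (1+t))
          = (if k = i then (if k = j then (1:ℝ) else 0) else 0)
            + (if k = i then v k * v j / (1+t) else 0)
            + (if k = j then v k * v i / (1+t) else 0)
            + v k ^ 2 * (v i * v j / ((1+t)*(1+t))) := by
        intro k
        by_cases h1 : k = i
        · subst h1
          by_cases h2 : k = j
          · subst h2
            simp only [if_pos rfl, eq_self_iff_true, if_true]
            field_simp
            ring
          · simp only [if_pos rfl, eq_self_iff_true, if_true, if_neg h2]
            field_simp
            ring
        · by_cases h2 : k = j
          · subst h2
            simp only [if_pos rfl, eq_self_iff_true, if_true, if_neg h1]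
            field_simp
            ring
          · simp only [if_neg h1, if_neg h2]
            field_simp
            ring
      rw [Finset.sum_congr rfl (fun k _ => expand k)]
      rw [Finset.sum_add_distrib, Finset.sum_add_distrib, Finset.sum_add_distrib]
      rw [Finset.sum_ite_eq' Finset.univ i (fun k => if k = j then (1:ℝ) else 0)]
      rw [Finset.sum_ite_eq' Finset.univ i (fun k => v k * v j / (1+t))]
      rw [Finset.sum_ite_eq' Finset.univ j (fun k => v k * v i / (1+t))]
      simp only [Finset.mem_univ, if_pos]
      rw [← Finset.sum_mul, hS]
      by_cases hij : i = j
      · subst hij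
        simp only [if_pos rfl, eq_self_iff_true, if_true]
        field_simp
        ring
      · have hji : j ≠ i := fun hh => hij hh.symm
        simp only [if_neg hij, if_neg hji]
        field_simp
        ring

def rotA (m : ℕ) (Q : Matrix (Fin (m+1)) (Fin (m+1)) ℝ) : Matrix (Fin (m+2)) (Fin (m+2)) ℝ :=
  Matrix.of (Fin.cons (Fin.cons 1 0) (fun i => Fin.cons 0 (fun j => Q i j)))

@[simp] lemma rotA_00 (m Q) : rotA m Q 0 0 = 1 := rfl
@[simp] lemma rotA_0s (m Q) (j : Fin (m+1)) : rotA m Q 0 j.succ = 0 := by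
  simp [rotA]
@[simp] lemma rotA_s0 (m Q) (i : Fin (m+1)) : rotA m Q i.succ 0 = 0 := by
  simp [rotA]
@[simp] lemma rotA_ss (m Q) (i j : Fin (m+1)) : rotA m Q i.succ j.succ = Q i j := by
  simp [rotA]

lemma orth_col {k : ℕ} {B : Matrix (Fin k) (Fin k) ℝ} (hB : Bᵀ * B = 1) (i j : Fin k) :
    ∑ l, B l i * B l j = if i = j then 1 else 0 := by
  have := Matrix.ext_iff.mpr hB i j
  rw [Matrix.mul_apply] at this
  simp only [transpose_apply] at this
  rw [this, Matrix.one_apply]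

lemma exists_orthog (k : ℕ) (u : Fin k → ℝ) (hu : ∑ i, u i ^ 2 = 1) (j₀ : Fin k) :
    ∃ B : Matrix (Fin k) (Fin k) ℝ, Bᵀ * B = 1 ∧ ∀ i, B i j₀ = u i := by
  classical
  let E := EuclideanSpace ℝ (Fin k)
  let U : E := WithLp.toLp 2 u
  have card : Module.finrank ℝ E = Fintype.card (Fin k) := by
    simp [E]
  have horth : Orthonormal ℝ (({j₀} : Set (Fin k)).restrict (fun _ => U)) := by
    rw [orthonormal_iff_ite]
    intro i j
    have : i = j := Subsingleton.elim i j
    subst this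
    simp only [if_pos rfl, Set.restrict]
    show (inner ℝ U U : ℝ) = 1
    rw [PiLp.inner_apply]
    simpa [pow_two, U] using hu
  obtain ⟨b, hb⟩ := Orthonormal.exists_orthonormalBasis_extension_of_card_eq card horth
  refine ⟨Matrix.of (fun i j => b j i), ?_, ?_⟩
  · ext i j
    have := orthonormal_iff_ite.mp b.orthonormal i j
    rw [PiLp.inner_apply] at this
    simp only [Matrix.mul_apply, transpose_apply, Matrix.of_apply, Matrix.one_apply]
    simpa [mul_comm] using this
  · intro i
    have := hb j₀ rfl
    simp [Matrix.of_apply, this, U]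

lemma rotA_inO (m : ℕ) (Q : Matrix (Fin (m+1)) (Fin (m+1)) ℝ) (hQ : Qᵀ * Q = 1) :
    inO m (rotA m Q) := by
  unfold inO
  ext i j
  rw [JmatA, Jmat_apply]
  induction i using Fin.cases with
  | zero =>
    induction j using Fin.cases with
    | zero => simp
    | succ j =>
      have hji : (0 : Fin (m+2)) ≠ j.succ := (Fin.succ_ne_zero j).symm
      simp [if_neg hji]
  | succ i =>
    induction j using Fin.cases with
    | zero =>
      have hij : i.succ ≠ (0 : Fin (m+2)) := Fin.succ_ne_zero i
      simp [if_neg hij]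
    | succ j =>
      have hsz : i.succ ≠ (0 : Fin (m+2)) := Fin.succ_ne_zero i
      have hiff : (i.succ = j.succ) = (i = j) := by simp [Fin.succ_inj]
      simp only [rotA_0s, rotA_ss, hiff, if_neg hsz, zero_mul, zero_sub]
      rw [orth_col hQ i j]
      by_cases hij : i = j <;> simp [hij]

section Idx
variable {m n : ℕ} (h : m < n)

@[simp] lemma e_inl (i : Fin (m+2)) : ((blockEquiv m n h (Sum.inl i)) : ℕ) = (i : ℕ) := by
  simp [blockEquiv]

@[simp] lemma e_inr (j : Fin (n-m)) : ((blockEquiv m n h (Sum.inr j)) : ℕ) = m + 2 + (j : ℕ) := by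
  simp [blockEquiv]

lemma g_apply (F : Matrix (Fin (m+2) ⊕ Fin (n-m)) (Fin (m+2) ⊕ Fin (n-m)) ℝ)
    (a b : Fin (m+2) ⊕ Fin (n-m)) :
    (reindex (blockEquiv m n h) (blockEquiv m n h) F) (blockEquiv m n h a) (blockEquiv m n h b)
      = F a b := by
  simp [reindex_apply]

lemma idx0 : (0 : Fin (n+2)) = blockEquiv m n h (Sum.inl 0) := by
  apply Fin.ext
  simp

lemma idx1 : (1 : Fin (n+2)) = blockEquiv m n h (Sum.inl 1) := by
  apply Fin.ext
  simp [Fin.val_one]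

lemma idxlast : (Fin.last n).succ = blockEquiv m n h (Sum.inr ⟨n-m-1, by omega⟩) := by
  apply Fin.ext
  simp [Fin.val_succ, Fin.val_last]
  omega

lemma idxlt (k : Fin (n+1)) (hk : (k : ℕ) < m+1) :
    k.succ = blockEquiv m n h (Sum.inl ⟨(k:ℕ)+1, by omega⟩) := by
  apply Fin.ext
  simp

lemma idxge (k : Fin (n+1)) (hk : m+1 ≤ (k : ℕ)) :
    k.succ = blockEquiv m n h (Sum.inr ⟨(k:ℕ)-(m+1), by have := k.isLt; omega⟩) := by
  apply Fin.ext
  simp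
  omega

end Idx

lemma act_single (n : ℕ) (g : Matrix (Fin (n+2)) (Fin (n+2)) ℝ) (p : Fin (n+1)) :
    act n g (Pi.single p 1)
      = (g 0 0 + g 0 p.succ)⁻¹ • fun i => g i.succ 0 + g i.succ p.succ := by
  have hcons : (Fin.cons 1 (Pi.single p 1) : Fin (n+2) → ℝ)
      = Pi.single (0 : Fin (n+2)) 1 + Pi.single p.succ 1 := by
    funext k
    induction k using Fin.cases with
    | zero => simp [Pi.single_apply, (Fin.succ_ne_zero p).symm]
    | succ k => simp [Pi.single_apply, Fin.succ_inj, Fin.succ_ne_zero]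
  unfold act
  rw [hcons, Matrix.mulVec_add, Matrix.mulVec_single_one, Matrix.mulVec_single_one]
  simp only [Pi.add_apply, mul_one, Matrix.col_apply]

lemma sum_split {m n : ℕ} (h : m < n) (f : Fin (n+1) → ℝ) :
    ∑ i, f i = ∑ i : Fin (m+1), f ⟨(i:ℕ), by omega⟩
      + ∑ j : Fin (n-m), f ⟨m+1+(j:ℕ), by have := j.isLt; omega⟩ := by
  rw [← Equiv.sum_comp (finSumFinEquiv.trans (finCongr (by omega : m+1+(n-m) = n+1))) f]
  rw [Fintype.sum_sum_type]
  refine congrArg₂ (· + ·) (Finset.sum_congr rfl fun i _ => ?_) (Finset.sum_congr rfl fun j _ => ?_)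
  · congr 1
  · congr 1

section ActFormulas
variable {m n : ℕ} (h : m < n)

def Y1 (A : Matrix (Fin (m+2)) (Fin (m+2)) ℝ) (B : Matrix (Fin (n-m)) (Fin (n-m)) ℝ) :
    Fin (n+1) → ℝ :=
  fun i => if hk : (i:ℕ) < m+1 then (A 0 0)⁻¹ * A ⟨(i:ℕ)+1, by omega⟩ 0
    else (A 0 0)⁻¹ * B ⟨(i:ℕ)-(m+1), by have := i.isLt; omega⟩ ⟨n-m-1, by omega⟩

def Y0 (A : Matrix (Fin (m+2)) (Fin (m+2)) ℝ) : Fin (n+1) → ℝ :=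
  fun i => if hk : (i:ℕ) < m+1 then
      (A 0 0 + A 0 1)⁻¹ * (A ⟨(i:ℕ)+1, by omega⟩ 0 + A ⟨(i:ℕ)+1, by omega⟩ 1)
    else 0

lemma act1_eq (A : Matrix (Fin (m+2)) (Fin (m+2)) ℝ) (B : Matrix (Fin (n-m)) (Fin (n-m)) ℝ) :
    act n (reindex (blockEquiv m n h) (blockEquiv m n h) (fromBlocks A 0 0 B))
      (Pi.single (Fin.last n) 1) = Y1 h A B := by
  set g := reindex (blockEquiv m n h) (blockEquiv m n h) (fromBlocks A 0 0 B) with hg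
  rw [act_single]
  have h00 : g 0 0 = A 0 0 := by
    rw [idx0 h, hg, g_apply]
    rfl
  have h0q : g 0 (Fin.last n).succ = 0 := by
    rw [idx0 h, idxlast h, hg, g_apply]
    rfl
  funext i
  simp only [Pi.smul_apply, smul_eq_mul, h00, h0q, add_zero, Y1]
  by_cases hk : (i:ℕ) < m+1
  · rw [dif_pos hk]
    have hs0 : g i.succ 0 = A ⟨(i:ℕ)+1, by omega⟩ 0 := by
      rw [idx0 h, idxlt h i hk, hg, g_apply]
      rfl
    have hsq : g i.succ (Fin.last n).succ = 0 := by
      rw [idxlt h i hk, idxlast h, hg, g_apply]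
      rfl
    rw [hs0, hsq, add_zero]
  · rw [dif_neg hk]
    push_neg at hk
    have hs0 : g i.succ 0 = 0 := by
      rw [idx0 h, idxge h i hk, hg, g_apply]
      rfl
    have hsq : g i.succ (Fin.last n).succ
        = B ⟨(i:ℕ)-(m+1), by have := i.isLt; omega⟩ ⟨n-m-1, by omega⟩ := by
      rw [idxge h i hk, idxlast h, hg, g_apply]
      rfl
    rw [hs0, hsq, zero_add]

lemma act0_eq (A : Matrix (Fin (m+2)) (Fin (m+2)) ℝ) (B : Matrix (Fin (n-m)) (Fin (n-m)) ℝ) :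
    act n (reindex (blockEquiv m n h) (blockEquiv m n h) (fromBlocks A 0 0 B))
      (Pi.single (0 : Fin (n+1)) 1) = Y0 (n := n) A := by
  set g := reindex (blockEquiv m n h) (blockEquiv m n h) (fromBlocks A 0 0 B) with hg
  rw [act_single]
  have hq : (0 : Fin (n+1)).succ = blockEquiv m n h (Sum.inl 1) := by
    apply Fin.ext
    simp [Fin.val_one]
  have h00 : g 0 0 = A 0 0 := by
    rw [idx0 h, hg, g_apply]
    rfl
  have h0q : g 0 (0 : Fin (n+1)).succ = A 0 1 := by
    rw [idx0 h, hq, hg, g_apply]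
    rfl
  funext i
  simp only [Pi.smul_apply, smul_eq_mul, h00, h0q, Y0]
  by_cases hk : (i:ℕ) < m+1
  · rw [dif_pos hk]
    have hs0 : g i.succ 0 = A ⟨(i:ℕ)+1, by omega⟩ 0 := by
      rw [idx0 h, idxlt h i hk, hg, g_apply]
      rfl
    have hsq : g i.succ (0 : Fin (n+1)).succ = A ⟨(i:ℕ)+1, by omega⟩ 1 := by
      rw [idxlt h i hk, hq, hg, g_apply]
      rfl
    rw [hs0, hsq]
  · rw [dif_neg hk]
    push_neg at hk
    have hs0 : g i.succ 0 = 0 := by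
      rw [idx0 h, idxge h i hk, hg, g_apply]
      rfl
    have hsq : g i.succ (0 : Fin (n+1)).succ = 0 := by
      rw [idxge h i hk, hq, hg, g_apply]
      rfl
    rw [hs0, hsq, add_zero, mul_zero]

end ActFormulas

section Orbits
variable {m n : ℕ}

lemma hY1lt (h : m < n) (A B) (i : Fin (m+1)) :
    Y1 h A B ⟨(i:ℕ), by omega⟩ = (A 0 0)⁻¹ * A i.succ 0 := by
  have hlt : ((⟨(i:ℕ), by omega⟩ : Fin (n+1)) : ℕ) < m+1 := i.isLt
  rw [Y1, dif_pos hlt]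
  congr 1

lemma hY1ge (h : m < n) (A B) (j : Fin (n-m)) :
    Y1 h A B ⟨m+1+(j:ℕ), by have := j.isLt; omega⟩
      = (A 0 0)⁻¹ * B j ⟨n-m-1, by omega⟩ := by
  have hge : ¬ ((⟨m+1+(j:ℕ), by have := j.isLt; omega⟩ : Fin (n+1)) : ℕ) < m+1 := by
    simp; omega
  rw [Y1, dif_neg hge]
  congr 2
  apply Fin.ext
  simp

lemma orbit1 (h : m < n) :
    {y : Fin (n + 1) → ℝ | ∃ g, inH' m n h g ∧ act n g (Pi.single (Fin.last n) 1) = y} =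
      {y : Fin (n + 1) → ℝ |
        (∑ i, y i ^ 2) = 1 ∧ ∃ i : Fin (n + 1), m + 1 ≤ (i : ℕ) ∧ y i ≠ 0} := by
  ext y
  constructor
  · rintro ⟨g, ⟨A, B, hA, hB, rfl⟩, rfl⟩
    rw [act1_eq h]
    set t := A 0 0 with hts
    have hSA : ∑ k : Fin (m+1), A k.succ 0 ^ 2 = t^2 - 1 := by
      have := inO_col m A hA 0 0
      norm_num at this
      have e0 : ∑ k : Fin (m+1), A k.succ 0 ^ 2 = ∑ k : Fin (m+1), A k.succ 0 * A k.succ 0 :=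
        Finset.sum_congr rfl (fun k _ => pow_two _)
      rw [e0]
      nlinarith [this]
    have hSApos : (0:ℝ) ≤ ∑ k : Fin (m+1), A k.succ 0 ^ 2 :=
      Finset.sum_nonneg (fun k _ => sq_nonneg _)
    have ht : t ≠ 0 := by
      intro h0
      rw [h0] at hSA
      nlinarith
    have hSB : ∑ l, B l ⟨n-m-1, by omega⟩ ^ 2 = 1 := by
      have := orth_col hB (⟨n-m-1, by omega⟩ : Fin (n-m)) ⟨n-m-1, by omega⟩
      norm_num at this
      rw [Finset.sum_congr rfl (fun l _ => pow_two (B l ⟨n-m-1, by omega⟩))]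
      exact this
    constructor
    · rw [sum_split h (fun i => Y1 h A B i ^ 2)]
      have e1 : ∑ i : Fin (m+1), Y1 h A B ⟨(i:ℕ), by omega⟩ ^ 2
          = t⁻¹^2 * (t^2 - 1) := by
        rw [Finset.sum_congr rfl (fun i _ => by rw [hY1lt h A B i, mul_pow])]
        rw [← Finset.mul_sum, hSA]
      have e2 : ∑ j : Fin (n-m), Y1 h A B ⟨m+1+(j:ℕ), by have := j.isLt; omega⟩ ^ 2
          = t⁻¹^2 * 1 := by
        rw [Finset.sum_congr rfl (fun j _ => by rw [hY1ge h A B j, mul_pow])]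
        rw [← Finset.mul_sum, hSB]
      rw [e1, e2]
      field_simp
      ring
    · have hex : ∃ j : Fin (n-m), B j ⟨n-m-1, by omega⟩ ≠ 0 := by
        by_contra hc
        push_neg at hc
        rw [Finset.sum_congr rfl (fun l _ => by rw [hc l]; norm_num : ∀ l ∈ Finset.univ, B l ⟨n-m-1, by omega⟩ ^ 2 = 0)] at hSB
        simp at hSB
      obtain ⟨j, hj⟩ := hex
      refine ⟨⟨m+1+(j:ℕ), by have := j.isLt; omega⟩, by simp, ?_⟩
      rw [hY1ge h A B j]
      exact mul_ne_zero (inv_ne_zero ht) hj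
  · rintro ⟨hsum, i₀, hi₀, hy₀⟩
    set r2 : ℝ := ∑ j : Fin (n-m), y ⟨m+1+(j:ℕ), by have := j.isLt; omega⟩ ^ 2 with hr2
    have hsplit := sum_split h (fun i => y i ^ 2)
    have hr2pos : 0 < r2 := by
      have hj₀lt : (i₀ : ℕ) - (m+1) < n - m := by have := i₀.isLt; omega
      have hmem : (⟨(i₀:ℕ)-(m+1), hj₀lt⟩ : Fin (n-m)) ∈ Finset.univ := Finset.mem_univ _
      have hle : y ⟨m+1+((i₀:ℕ)-(m+1)), by omega⟩ ^ 2 ≤ r2 :=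
        Finset.single_le_sum (f := fun j : Fin (n-m) =>
          y ⟨m+1+(j:ℕ), by have := j.isLt; omega⟩ ^ 2) (fun j _ => sq_nonneg _) hmem
      have hidx : (⟨m+1+((i₀:ℕ)-(m+1)), by omega⟩ : Fin (n+1)) = i₀ := by
        apply Fin.ext
        simp
        omega
      rw [hidx] at hle
      have : 0 < y i₀ ^ 2 := by positivity
      linarith
    set r : ℝ := Real.sqrt r2 with hrdef
    have hrpos : 0 < r := Real.sqrt_pos.mpr hr2pos
    have hrsq : r^2 = r2 := Real.sq_sqrt hr2pos.le
    set v : Fin (m+1) → ℝ := fun k => y ⟨(k:ℕ), by omega⟩ / r with hv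
    set u : Fin (n-m) → ℝ := fun j => y ⟨m+1+(j:ℕ), by have := j.isLt; omega⟩ / r with hu
    have hsum1 : ∑ i : Fin (m+1), y ⟨(i:ℕ), by omega⟩ ^ 2 = 1 - r2 := by
      rw [hsplit] at hsum
      linarith
    have husum : ∑ j, u j ^ 2 = 1 := by
      rw [hu]
      simp only [div_pow]
      rw [← Finset.sum_div, ← hr2, hrsq.symm]
      field_simp
    obtain ⟨B, hB, hBcol⟩ := exists_orthog (n-m) u husum ⟨n-m-1, by omega⟩
    have hA : inO m (boost m r⁻¹ v) := by
      apply boost_inO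
      · positivity
      · rw [hv]
        simp only [div_pow]
        rw [← Finset.sum_div, hsum1, hrsq.symm]
        field_simp
        ring
    refine ⟨_, ⟨boost m r⁻¹ v, B, hA, hB, rfl⟩, ?_⟩
    rw [act1_eq h]
    funext i
    by_cases hk : (i:ℕ) < m+1
    · have hidx : i = ⟨((⟨(i:ℕ), hk⟩ : Fin (m+1)):ℕ), by omega⟩ := by
        apply Fin.ext
        rfl
      rw [hidx, hY1lt h _ B ⟨(i:ℕ), hk⟩]
      rw [boost_00, boost_s0]
      rw [hv]
      simp only [inv_inv]
      rw [div_eq_mul_inv]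
      have : (⟨((⟨(i:ℕ), hk⟩ : Fin (m+1)):ℕ), by omega⟩ : Fin (n+1)) = i := by
        apply Fin.ext
        rfl
      field_simp
    · push_neg at hk
      have hrne : r ≠ 0 := ne_of_gt hrpos
      have key : ∀ (J : Fin (n+1)), (J:ℕ) = m+1+((i:ℕ)-(m+1)) → r * (y J / r) = y i := by
        intro J hJ
        have hJi : J = i := by
          apply Fin.ext
          omega
        rw [hJi]
        field_simp
      simp only [Y1]
      rw [dif_neg (by omega : ¬ (i:ℕ) < m+1)]
      rw [boost_00, hBcol]
      simp only [hu, inv_inv]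
      exact key _ rfl

end Orbits

section Orbit0
variable {m n : ℕ}

lemma orbit0 (h : m < n) :
    {y : Fin (n + 1) → ℝ | ∃ g, inH' m n h g ∧ act n g (Pi.single 0 1) = y} =
      {y : Fin (n + 1) → ℝ |
        (∑ i, y i ^ 2) = 1 ∧ ∀ i : Fin (n + 1), m + 1 ≤ (i : ℕ) → y i = 0} := by
  ext y
  constructor
  · rintro ⟨g, ⟨A, B, hA, hB, rfl⟩, rfl⟩
    rw [act0_eq h]
    set c : Fin (m+2) → ℝ := fun i => A i 0 + A i 1 with hc
    have h01 : (0 : Fin (m+2)) ≠ 1 := by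
      simp [Fin.ext_iff]
    have r00 : A 0 0 * A 0 0 - ∑ k : Fin (m+1), A k.succ 0 * A k.succ 0 = 1 := by
      have := inO_col m A hA 0 0
      norm_num at this
      exact this
    have r01 : A 0 0 * A 0 1 - ∑ k : Fin (m+1), A k.succ 0 * A k.succ 1 = 0 := by
      have := inO_col m A hA 0 1
      rw [if_neg h01] at this
      exact this
    have r11 : A 0 1 * A 0 1 - ∑ k : Fin (m+1), A k.succ 1 * A k.succ 1 = -1 := by
      have := inO_col m A hA 1 1
      rw [if_pos rfl, if_neg (Ne.symm h01)] at this
      exact this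
    have exp : ∑ k : Fin (m+1), c k.succ ^ 2
        = (∑ k : Fin (m+1), A k.succ 0 * A k.succ 0)
          + 2*(∑ k : Fin (m+1), A k.succ 0 * A k.succ 1)
          + (∑ k : Fin (m+1), A k.succ 1 * A k.succ 1) := by
      rw [Finset.sum_congr rfl (fun k _ => by
        show (A k.succ 0 + A k.succ 1)^2 = A k.succ 0 * A k.succ 0
          + 2*(A k.succ 0 * A k.succ 1) + A k.succ 1 * A k.succ 1
        ring)]
      rw [Finset.sum_add_distrib, Finset.sum_add_distrib, Finset.mul_sum]
    have key : c 0 ^ 2 = ∑ k : Fin (m+1), c k.succ ^ 2 := by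
      have hc0 : c 0 = A 0 0 + A 0 1 := rfl
      rw [hc0, exp]
      nlinarith [r00, r01, r11]
    have ht : c 0 ≠ 0 := by
      intro h0
      have hsumz : ∑ k : Fin (m+1), c k.succ ^ 2 = 0 := by
        rw [← key, h0]
        norm_num
      have hz : ∀ k : Fin (m+1), c k.succ = 0 := by
        intro k
        have := (Finset.sum_eq_zero_iff_of_nonneg
          (fun k _ => sq_nonneg (c k.succ))).mp hsumz k (Finset.mem_univ k)
        exact (pow_eq_zero_iff two_ne_zero).mp this
      have e11 : ∑ k : Fin (m+1), A k.succ 1 * A k.succ 1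
          = ∑ k : Fin (m+1), A k.succ 0 * A k.succ 0 := by
        apply Finset.sum_congr rfl
        intro k _
        have hk : A k.succ 0 + A k.succ 1 = 0 := hz k
        have hneg : A k.succ 1 = - A k.succ 0 := by linarith
        rw [hneg]
        ring
      have eA01 : A 0 1 = - A 0 0 := by
        have h00 : A 0 0 + A 0 1 = 0 := h0
        linarith
      have hA01sq : A 0 1 * A 0 1 = A 0 0 * A 0 0 := by
        rw [eA01]; ring
      rw [e11, hA01sq] at r11
      linarith [r00, r11]
    constructor
    · rw [sum_split h (fun i => Y0 (n := n) A i ^ 2)]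
      have e2 : ∑ j : Fin (n-m), Y0 (n := n) A ⟨m+1+(j:ℕ), by have := j.isLt; omega⟩ ^ 2 = 0 := by
        apply Finset.sum_eq_zero
        intro j _
        rw [Y0, dif_neg (by simp; omega)]
        norm_num
      have e1 : ∑ i : Fin (m+1), Y0 (n := n) A ⟨(i:ℕ), by omega⟩ ^ 2
          = (c 0)⁻¹ ^ 2 * ∑ k : Fin (m+1), c k.succ ^ 2 := by
        rw [Finset.mul_sum]
        apply Finset.sum_congr rfl
        intro i _
        have hlt : ((⟨(i:ℕ), by omega⟩ : Fin (n+1)) : ℕ) < m+1 := i.isLt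
        rw [Y0, dif_pos hlt]
        have hidx : (⟨((⟨(i:ℕ), by omega⟩ : Fin (n+1)):ℕ)+1, by omega⟩ : Fin (m+2)) = i.succ := by
          apply Fin.ext
          simp
        rw [hidx]
        have e3 : c 0 = A 0 0 + A 0 1 := rfl
        have e4 : c i.succ = A i.succ 0 + A i.succ 1 := rfl
        rw [← e3, ← e4]
        ring
      rw [e1, e2, ← key, add_zero]
      field_simp
    · intro i hi
      rw [Y0, dif_neg (by omega)]
  · rintro ⟨hsum, htail⟩
    set y' : Fin (m+1) → ℝ := fun i => y ⟨(i:ℕ), by omega⟩ with hy'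
    have hy'sum : ∑ i, y' i ^ 2 = 1 := by
      rw [← hsum, sum_split h (fun i => y i ^ 2)]
      have e2 : ∑ j : Fin (n-m), y ⟨m+1+(j:ℕ), by have := j.isLt; omega⟩ ^ 2 = 0 := by
        apply Finset.sum_eq_zero
        intro j _
        rw [htail _ (by simp)]
        norm_num
      rw [e2, add_zero]
    obtain ⟨Q, hQ, hQcol⟩ := exists_orthog (m+1) y' hy'sum 0
    refine ⟨_, ⟨rotA m Q, 1, rotA_inO m Q hQ, by simp, rfl⟩, ?_⟩
    rw [act0_eq h]
    funext i
    have h1succ : (1 : Fin (m+2)) = (0 : Fin (m+1)).succ := by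
      apply Fin.ext
      simp [Fin.val_one]
    by_cases hk : (i:ℕ) < m+1
    · rw [Y0, dif_pos hk]
      have hidx : (⟨(i:ℕ)+1, by omega⟩ : Fin (m+2)) = (⟨(i:ℕ), hk⟩ : Fin (m+1)).succ := by
        apply Fin.ext
        simp
      rw [hidx, h1succ, rotA_00, rotA_0s, rotA_s0, rotA_ss, hQcol]
      have hie : (⟨((⟨(i:ℕ), hk⟩ : Fin (m+1)):ℕ), by omega⟩ : Fin (n+1)) = i := by
        apply Fin.ext
        rfl
      rw [hy']
      simp only [hie]
      norm_num
    · rw [Y0, dif_neg hk]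
      exact (htail i (by omega)).symm

end Orbit0


lemma open_lemma (m n : ℕ) :
    IsOpen {y : {x : Fin (n + 1) → ℝ // (∑ i, x i ^ 2) = 1} |
        ∃ i : Fin (n + 1), m + 1 ≤ (i : ℕ) ∧ y.1 i ≠ 0} := by
  have hset : {y : {x : Fin (n + 1) → ℝ // (∑ i, x i ^ 2) = 1} |
        ∃ i : Fin (n + 1), m + 1 ≤ (i : ℕ) ∧ y.1 i ≠ 0}
      = ⋃ i : Fin (n + 1), {y : {x : Fin (n + 1) → ℝ // (∑ i, x i ^ 2) = 1} |
          m + 1 ≤ (i : ℕ) ∧ y.1 i ≠ 0} := by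
    ext y
    simp [Set.mem_iUnion]
  rw [hset]
  apply isOpen_iUnion
  intro i
  by_cases hi : m + 1 ≤ (i : ℕ)
  · have : {y : {x : Fin (n + 1) → ℝ // (∑ i, x i ^ 2) = 1} | m + 1 ≤ (i : ℕ) ∧ y.1 i ≠ 0}
        = (fun y : {x : Fin (n + 1) → ℝ // (∑ i, x i ^ 2) = 1} => y.1 i) ⁻¹' ({0}ᶜ) := by
      ext y
      simp [hi]
    rw [this]
    exact IsOpen.preimage ((continuous_apply i).comp continuous_subtype_val)
      isOpen_compl_singleton
  · have : {y : {x : Fin (n + 1) → ℝ // (∑ i, x i ^ 2) = 1} | m + 1 ≤ (i : ℕ) ∧ y.1 i ≠ 0}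
        = ∅ := by
      ext y
      simp [hi]
    rw [this]
    exact isOpen_empty

lemma dense_lemma (m n : ℕ) (h : m < n) :
    Dense {y : {x : Fin (n + 1) → ℝ // (∑ i, x i ^ 2) = 1} |
        ∃ i : Fin (n + 1), m + 1 ≤ (i : ℕ) ∧ y.1 i ≠ 0} := by
  intro y
  by_cases hy : y ∈ {y : {x : Fin (n + 1) → ℝ // (∑ i, x i ^ 2) = 1} |
      ∃ i : Fin (n + 1), m + 1 ≤ (i : ℕ) ∧ y.1 i ≠ 0}
  · exact subset_closure hy
  · have hy' : ∀ i : Fin (n + 1), m + 1 ≤ (i : ℕ) → y.1 i = 0 := by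
      simp only [Set.mem_setOf_eq, not_exists, not_and, not_not] at hy
      exact hy
    have hz : y.1 (Fin.last n) = 0 := hy' (Fin.last n) (by simp [Fin.val_last]; omega)
    set z : ℝ → (Fin (n+1) → ℝ) := fun θ i =>
      Real.cos θ * y.1 i + Real.sin θ * ((Pi.single (Fin.last n) (1:ℝ) : Fin (n+1) → ℝ) i) with hzdef
    have hsum : ∀ θ, ∑ i, z θ i ^ 2 = 1 := by
      intro θ
      have expand : ∀ i : Fin (n+1), z θ i ^ 2
          = Real.cos θ ^ 2 * (y.1 i ^ 2)
            + (2 * Real.cos θ * Real.sin θ) * (y.1 i * (Pi.single (Fin.last n) (1:ℝ) : Fin (n+1) → ℝ) i)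
            + Real.sin θ ^ 2 * ((Pi.single (Fin.last n) (1:ℝ) : Fin (n+1) → ℝ) i ^ 2) := by
        intro i
        simp only [hzdef]
        ring
      rw [Finset.sum_congr rfl (fun i _ => expand i), Finset.sum_add_distrib,
        Finset.sum_add_distrib, ← Finset.mul_sum, ← Finset.mul_sum, ← Finset.mul_sum]
      have h1 : ∑ i, y.1 i ^ 2 = 1 := y.2
      have h2 : ∑ i, y.1 i * (Pi.single (Fin.last n) (1:ℝ) : Fin (n+1) → ℝ) i = y.1 (Fin.last n) := by
        simp [Pi.single_apply, mul_ite]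
      have h3 : ∑ i, (Pi.single (Fin.last n) (1:ℝ) : Fin (n+1) → ℝ) i ^ 2 = 1 := by
        have : ∀ i : Fin (n+1), (Pi.single (Fin.last n) (1:ℝ) : Fin (n+1) → ℝ) i ^ 2
            = (Pi.single (Fin.last n) (1:ℝ) : Fin (n+1) → ℝ) i := by
          intro i
          simp only [Pi.single_apply]
          split <;> norm_num
        rw [Finset.sum_congr rfl (fun i _ => this i)]
        simp [Pi.single_apply]
      rw [h1, h2, h3, hz]
      have := Real.sin_sq_add_cos_sq θ
      ring_nf
      linarith
    set F : ℝ → {x : Fin (n + 1) → ℝ // (∑ i, x i ^ 2) = 1} := fun θ => ⟨z θ, hsum θ⟩ with hF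
    have hFcont : Continuous F := by
      apply Continuous.subtype_mk
      apply continuous_pi
      intro i
      exact (Real.continuous_cos.mul continuous_const).add
        (Real.continuous_sin.mul continuous_const)
    have hF0 : F 0 = y := by
      apply Subtype.ext
      funext i
      simp [hF, hzdef]
    have htend : Filter.Tendsto F (nhdsWithin 0 (Set.Ioi (0:ℝ))) (nhds y) := by
      rw [← hF0]
      exact (hFcont.tendsto 0).mono_left nhdsWithin_le_nhds
    apply mem_closure_of_tendsto htend
    filter_upwards [Ioo_mem_nhdsGT_of_mem
      (Set.mem_Ico.mpr ⟨le_refl (0:ℝ), Real.pi_pos⟩)] with θ hθ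
    refine ⟨Fin.last n, by simp [Fin.val_last]; omega, ?_⟩
    show z θ (Fin.last n) ≠ 0
    have hsin : Real.sin θ ≠ 0 := ne_of_gt (Real.sin_pos_of_pos_of_lt_pi hθ.1 hθ.2)
    simp [hzdef, hz, Pi.single_eq_same, hsin]


/-- the `H'`-orbit of `e_{n+1}` is `𝒪₁ = {(x',x'') ∈ Sⁿ : x'' ≠ 0}`, which is open
and dense in `Sⁿ`, and the `H'`-orbit of `e₁` is `𝒪₀ = {(x',0) : |x'| = 1}`. -/
theorem stmt14 (m n : ℕ) (h : m < n) :
    {y : Fin (n + 1) → ℝ | ∃ g, inH' m n h g ∧ act n g (Pi.single (Fin.last n) 1) = y} =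
        {y : Fin (n + 1) → ℝ |
          (∑ i, y i ^ 2) = 1 ∧ ∃ i : Fin (n + 1), m + 1 ≤ (i : ℕ) ∧ y i ≠ 0} ∧
      IsOpen {y : {x : Fin (n + 1) → ℝ // (∑ i, x i ^ 2) = 1} |
          ∃ i : Fin (n + 1), m + 1 ≤ (i : ℕ) ∧ y.1 i ≠ 0} ∧
      Dense {y : {x : Fin (n + 1) → ℝ // (∑ i, x i ^ 2) = 1} |
          ∃ i : Fin (n + 1), m + 1 ≤ (i : ℕ) ∧ y.1 i ≠ 0} ∧
      {y : Fin (n + 1) → ℝ | ∃ g, inH' m n h g ∧ act n g (Pi.single 0 1) = y} =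
        {y : Fin (n + 1) → ℝ |
          (∑ i, y i ^ 2) = 1 ∧ ∀ i : Fin (n + 1), m + 1 ≤ (i : ℕ) → y i = 0} := by
  exact ⟨orbit1 h, open_lemma m n, dense_lemma m n h, orbit0 h⟩
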